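/- Write n = p^m · n' with p ∤ n' and h = p^m. Then the kernel of Δ^h has exactly q^h elements. -/

import Mathlib

theorem stmt_10 (q p n m : ℕ) (hn : 0 < n) (F : Type*) [Field F] [Fintype F]
    [CharP F p] (hq : Fintype.card F = q)
    (hdvd : p ^ m ∣ n) (hndvd : ¬ p ^ (m + 1) ∣ n) :
    Nat.card {x : ZMod n → F //
      (fun (y : ZMod n → F) => fun j => y (j + 1) - y j)^[p ^ m] x = 0} = q ^ (p ^ m) := by
  haveI : NeZero n := ⟨hn.ne'⟩
  haveI hp : Fact p.Prime := ⟨CharP.char_is_prime F p⟩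
  set h : ℕ := p ^ m with hh
  haveI : NeZero h := ⟨pow_ne_zero _ hp.out.pos.ne'⟩
  -- the shift operator
  set σ : (ZMod n → F) →ₗ[F] (ZMod n → F) :=
    { toFun := fun y j => y (j + 1)
      map_add' := fun a b => rfl
      map_smul' := fun c a => rfl } with hσ
  have hσpow : ∀ (k : ℕ) (x : ZMod n → F) (j : ZMod n), (σ ^ k) x j = x (j + (k : ZMod n)) := by
    intro k
    induction k with
    | zero => intro x j; simp
    | succ k ih =>
      intro x j
      rw [pow_succ', Module.End.mul_apply]
      show ((σ ^ k) x) (j + 1) = _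
      rw [ih]
      push_cast
      ring_nf
  -- the difference operator as a linear map
  have hΔ : (fun (y : ZMod n → F) => fun j => y (j + 1) - y j) = ⇑(σ - 1) := by
    funext y j; simp [hσ]
  haveI : CharP (Module.End F (ZMod n → F)) p :=
    charP_of_injective_algebraMap' F p
  have key : ∀ x : ZMod n → F,
      ((fun (y : ZMod n → F) => fun j => y (j + 1) - y j)^[h] x = 0 ↔
        ∀ j : ZMod n, x (j + (h : ZMod n)) = x j) := by
    intro x
    rw [hΔ, ← Module.End.pow_apply, hh,
      sub_pow_char_pow_of_commute p m (Commute.one_right σ), one_pow]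
    constructor
    · intro hx j
      have := congr_fun hx j
      simp only [LinearMap.sub_apply, Module.End.one_apply, Pi.sub_apply, Pi.zero_apply,
        sub_eq_zero] at this
      rw [← this, hσpow]
    · intro hx
      funext j
      simp only [LinearMap.sub_apply, Module.End.one_apply, Pi.sub_apply, Pi.zero_apply,
        sub_eq_zero, hσpow]
      exact hx j
  -- periodicity lemma: such x factor through ZMod h
  have periodic : ∀ (x : ZMod n → F), (∀ j : ZMod n, x (j + (h : ZMod n)) = x j) →
      ∀ a : ℕ, x ((a : ZMod n)) = x ((a % h : ℕ) : ZMod n) := by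
    intro x hx a
    conv_lhs => rw [← Nat.mod_add_div a h]
    generalize a / h = t
    induction t with
    | zero => simp
    | succ t ih =>
      have : (a % h : ℕ) + h * (t + 1) = ((a % h : ℕ) + h * t) + h := by ring
      rw [this]
      push_cast
      rw [hx]
      push_cast at ih
      exact ih
  -- build the equivalence with (ZMod h → F)
  have e : {x : ZMod n → F //
      (fun (y : ZMod n → F) => fun j => y (j + 1) - y j)^[h] x = 0} ≃ (ZMod h → F) := by
    refine
      { toFun := fun x k => x.1 ((k.val : ZMod n))
        invFun := fun y => ⟨fun j => y (ZMod.castHom hdvd (ZMod h) j), ?_⟩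
        left_inv := ?_
        right_inv := ?_ }
    · rw [key]
      intro j
      simp only [map_add, map_natCast, ZMod.natCast_self, add_zero]
    · intro x
      ext j
      have hx := (key x.1).1 x.2
      show x.1 (((ZMod.castHom hdvd (ZMod h) j).val : ℕ) : ZMod n) = x.1 j
      have h1 : (ZMod.castHom hdvd (ZMod h) j).val = j.val % h := by
        conv_lhs => rw [← ZMod.natCast_rightInverse j]
        rw [map_natCast, ZMod.val_natCast]
      rw [h1, ← periodic x.1 hx j.val, ZMod.natCast_rightInverse j]
    · intro y
      funext k
      show y (ZMod.castHom hdvd (ZMod h) ((k.val : ℕ) : ZMod n)) = y k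
      rw [map_natCast, ZMod.natCast_rightInverse k]
  rw [Nat.card_congr e, Nat.card_eq_fintype_card, Fintype.card_fun, hq, ZMod.card]
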